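/- Let n, m ≥ 0, A ⊆ Act, a_i, b_j ∈ Act and t_i, s_j be CLL process terms (i < n, j < m). Define Ω1 = {a_i.(t_i ∥_A □_{j<m}b_j.s_j) : i < n, a_i ∉ A}, Ω2 = {b_j.(□_{i<n}a_i.t_i ∥_A s_j) : j < m, b_j ∉ A}, Ω3 = {a_i.(t_i ∥_A s_j) : i < n, j < m, a_i = b_j ∈ A}. Then: (1) □_{i<n}a_i.t_i ∥_A □_{j<m}b_j.s_j ⊑_RS ((□Ω1)□(□Ω2))□(□Ω3); and (2) if no term of {t_i : a_i ∈ A and a_i ≠ b_j for all j < m} ∪ {s_j : b_j ∈ A and b_j ≠ a_i for all i < n} lies in F_CLL, then ((□Ω1)□(□Ω2))□(□Ω3) ⊑_RS □_{i<n}a_i.t_i ∥_A □_{j<m}b_j.s_j. -/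

import Mathlib

namespace CLL

attribute [local instance] Classical.propDecidable

/-- CLL process terms over a set `Act` of visible actions.  The action `τ` is
represented by `none : Option Act`, a visible action `a` by `some a`. -/
inductive Tm (Act : Type) : Type where
  | nil  : Tm Act                            -- 0
  | bot  : Tm Act                            -- ⊥
  | pre  : Option Act → Tm Act → Tm Act      -- α.t
  | ec   : Tm Act → Tm Act → Tm Act          -- t □ t
  | conj : Tm Act → Tm Act → Tm Act          -- t ∧ t
  | disj : Tm Act → Tm Act → Tm Act          -- t ∨ t
  | par  : Set Act → Tm Act → Tm Act → Tm Act -- t ∥_A t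

/-- A transition model: a set of transitions `t →α t'`, of instances `t F` of the
inconsistency predicate, and of instances `t F̄_α` of the auxiliary predicates. -/
structure Model (Act : Type) where
  Tr   : Tm Act → Option Act → Tm Act → Prop
  F    : Tm Act → Prop
  Fbar : Tm Act → Option Act → Prop

variable {Act : Type}

/-- The least transition relation of the positive TSS `Strip(P_CLL, M)`:
ground instances of transition rules of `P_CLL` whose negative premises
(checked against `M`) hold, with those negative premises removed. -/
inductive STr (M : Model Act) : Tm Act → Option Act → Tm Act → Prop where
  | pre (α : Option Act) (t : Tm Act) : STr M (Tm.pre α t) α t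
  | ecL {t1 t2 y1 : Tm Act} {a : Act} :
      STr M t1 (some a) y1 → (∀ y, ¬ M.Tr t2 none y) →
      STr M (Tm.ec t1 t2) (some a) y1
  | ecR {t1 t2 y2 : Tm Act} {a : Act} :
      (∀ y, ¬ M.Tr t1 none y) → STr M t2 (some a) y2 →
      STr M (Tm.ec t1 t2) (some a) y2
  | ecTauL {t1 t2 y1 : Tm Act} :
      STr M t1 none y1 → STr M (Tm.ec t1 t2) none (Tm.ec y1 t2)
  | ecTauR {t1 t2 y2 : Tm Act} :
      STr M t2 none y2 → STr M (Tm.ec t1 t2) none (Tm.ec t1 y2)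
  | conjAct {t1 t2 y1 y2 : Tm Act} {a : Act} :
      STr M t1 (some a) y1 → STr M t2 (some a) y2 →
      STr M (Tm.conj t1 t2) (some a) (Tm.conj y1 y2)
  | conjTauL {t1 t2 y1 : Tm Act} :
      STr M t1 none y1 → STr M (Tm.conj t1 t2) none (Tm.conj y1 t2)
  | conjTauR {t1 t2 y2 : Tm Act} :
      STr M t2 none y2 → STr M (Tm.conj t1 t2) none (Tm.conj t1 y2)
  | disjL (t1 t2 : Tm Act) : STr M (Tm.disj t1 t2) none t1
  | disjR (t1 t2 : Tm Act) : STr M (Tm.disj t1 t2) none t2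
  | parTauL {A : Set Act} {t1 t2 y1 : Tm Act} :
      STr M t1 none y1 → STr M (Tm.par A t1 t2) none (Tm.par A y1 t2)
  | parTauR {A : Set Act} {t1 t2 y2 : Tm Act} :
      STr M t2 none y2 → STr M (Tm.par A t1 t2) none (Tm.par A t1 y2)
  | parL {A : Set Act} {t1 t2 y1 : Tm Act} {a : Act} :
      STr M t1 (some a) y1 → (∀ y, ¬ M.Tr t2 none y) → a ∉ A →
      STr M (Tm.par A t1 t2) (some a) (Tm.par A y1 t2)
  | parR {A : Set Act} {t1 t2 y2 : Tm Act} {a : Act} :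
      (∀ y, ¬ M.Tr t1 none y) → STr M t2 (some a) y2 → a ∉ A →
      STr M (Tm.par A t1 t2) (some a) (Tm.par A t1 y2)
  | parSync {A : Set Act} {t1 t2 y1 y2 : Tm Act} {a : Act} :
      STr M t1 (some a) y1 → STr M t2 (some a) y2 → a ∈ A →
      STr M (Tm.par A t1 t2) (some a) (Tm.par A y1 y2)

/-- Least model of the `F̄_α` rules of `Strip(P_CLL, M)`. -/
inductive SFbar (M : Model Act) : Tm Act → Option Act → Prop where
  | intro {t1 t2 y : Tm Act} {α : Option Act} :
      STr M (Tm.conj t1 t2) α y → ¬ M.F y → SFbar M (Tm.conj t1 t2) α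

/-- Least model of the `F` rules of `Strip(P_CLL, M)`. -/
inductive SF (M : Model Act) : Tm Act → Prop where
  | bot : SF M Tm.bot
  | pre {t : Tm Act} (α : Option Act) : SF M t → SF M (Tm.pre α t)
  | disj {t1 t2 : Tm Act} : SF M t1 → SF M t2 → SF M (Tm.disj t1 t2)
  | ecL {t1 t2 : Tm Act} : SF M t1 → SF M (Tm.ec t1 t2)
  | ecR {t1 t2 : Tm Act} : SF M t2 → SF M (Tm.ec t1 t2)
  | conjL {t1 t2 : Tm Act} : SF M t1 → SF M (Tm.conj t1 t2)
  | conjR {t1 t2 : Tm Act} : SF M t2 → SF M (Tm.conj t1 t2)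
  | parL {A : Set Act} {t1 t2 : Tm Act} : SF M t1 → SF M (Tm.par A t1 t2)
  | parR {A : Set Act} {t1 t2 : Tm Act} : SF M t2 → SF M (Tm.par A t1 t2)
  | conjMisL {t1 t2 y1 : Tm Act} {a : Act} :
      STr M t1 (some a) y1 → (∀ y, ¬ M.Tr t2 (some a) y) →
      (∀ y, ¬ M.Tr (Tm.conj t1 t2) none y) → SF M (Tm.conj t1 t2)
  | conjMisR {t1 t2 y2 : Tm Act} {a : Act} :
      (∀ y, ¬ M.Tr t1 (some a) y) → STr M t2 (some a) y2 →
      (∀ y, ¬ M.Tr (Tm.conj t1 t2) none y) → SF M (Tm.conj t1 t2)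
  | conjDead {t1 t2 z : Tm Act} {α : Option Act} :
      STr M (Tm.conj t1 t2) α z → ¬ M.Fbar (Tm.conj t1 t2) α →
      SF M (Tm.conj t1 t2)

/-- `M` is a stable transition model of `P_CLL`:  `M` coincides with the least
model of the positive TSS `Strip(P_CLL, M)`. -/
def IsStable (M : Model Act) : Prop :=
  (∀ t α t', M.Tr t α t' ↔ STr M t α t') ∧
  (∀ t, M.F t ↔ SF M t) ∧
  (∀ t α, M.Fbar t α ↔ SFbar M t α)

/-- `t` is stable: it has no τ-transition. -/
def Stable (M : Model Act) (t : Tm Act) : Prop := ∀ t', ¬ M.Tr t none t'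

/-- The ready set `I(t)`. -/
def Ready (M : Model Act) (t : Tm Act) : Set (Option Act) :=
  {α | ∃ u, M.Tr t α u}

/-- One τ-step between consistent terms: `t →τ_F s`. -/
def TauF (M : Model Act) (t s : Tm Act) : Prop :=
  M.Tr t none s ∧ ¬ M.F t ∧ ¬ M.F s

/-- `t ⇒ε_F s`: a sequence of τ-transitions all whose terms (endpoints included)
are consistent. -/
def EpsF (M : Model Act) (t s : Tm Act) : Prop :=
  ¬ M.F t ∧ Relation.ReflTransGen (TauF M) t s

/-- `t ⇒ε_F| s`:  `t ⇒ε_F s` with `s` stable. -/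
def EpsFS (M : Model Act) (t s : Tm Act) : Prop :=
  EpsF M t s ∧ Stable M s

/-- `t ⇒α_F s`. -/
def WeakF (M : Model Act) (α : Option Act) (t s : Tm Act) : Prop :=
  ∃ r p, EpsF M t r ∧ M.Tr r α p ∧ EpsF M p s

/-- `t ⇒α_F| s`. -/
def WeakFS (M : Model Act) (α : Option Act) (t s : Tm Act) : Prop :=
  WeakF M α t s ∧ Stable M s

/-- `R` is a stable ready simulation relation. -/
def IsRS (M : Model Act) (R : Tm Act → Tm Act → Prop) : Prop :=
  ∀ t s, R t s →
    (Stable M t ∧ Stable M s) ∧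
    (¬ M.F t → ¬ M.F s) ∧
    (∀ (a : Act) t', WeakFS M (some a) t t' →
      ∃ s', WeakFS M (some a) s s' ∧ R t' s') ∧
    (¬ M.F t → Ready M t = Ready M s)

/-- `t ⊏̃_RS s`. -/
def RSs (M : Model Act) (t s : Tm Act) : Prop :=
  ∃ R, IsRS M R ∧ R t s

/-- `t ⊑_RS s`. -/
def RSle (M : Model Act) (t s : Tm Act) : Prop :=
  ∀ t', EpsFS M t t' → ∃ s', EpsFS M s s' ∧ RSs M t' s'

/-- `t =_RS s`. -/
def RSeq (M : Model Act) (t s : Tm Act) : Prop :=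
  RSle M t s ∧ RSle M s t

/-- The binary operators `□`, `∧` and `∥_A`. -/
def IsStaticOp (Act : Type) (op : Tm Act → Tm Act → Tm Act) : Prop :=
  op = Tm.ec ∨ op = Tm.conj ∨ ∃ A : Set Act, op = Tm.par A

/-- General external choice `□_{i<n} t_i` over a finite sequence of terms. -/
def bigEC : List (Tm Act) → Tm Act
  | [] => Tm.nil
  | t :: ts => ts.foldl Tm.ec t

/-- General disjunction `⋁_{i<n} t_i` over a finite (nonempty) sequence. -/
def bigDisj : List (Tm Act) → Tm Act
  | [] => Tm.nil
  | t :: ts => ts.foldl Tm.disj t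

/-- `□_{i<n} a_i.t_i` for a sequence of prefixed terms given by pairs. -/
def ecPre (l : List (Act × Tm Act)) : Tm Act :=
  bigEC (l.map fun p => Tm.pre (some p.1) p.2)

/-- The sequence of all `a_i.(t_i ∧ s_j)` with `a_i = b_j`. -/
noncomputable def matched (l1 l2 : List (Act × Tm Act)) : List (Act × Tm Act) :=
  ((l1.product l2).filter fun q => decide (q.1.1 = q.2.1)).map
    fun q => (q.1.1, Tm.conj q.1.2 q.2.2)

/-- The right-hand side `((□Ω1)□(□Ω2))□(□Ω3)` of the expansion law. -/
noncomputable def expRHS (A : Set Act) (l1 l2 : List (Act × Tm Act)) : Tm Act :=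
  Tm.ec
    (Tm.ec
      (bigEC ((l1.filter fun p => decide (p.1 ∉ A)).map
        fun p => Tm.pre (some p.1) (Tm.par A p.2 (ecPre l2))))
      (bigEC ((l2.filter fun q => decide (q.1 ∉ A)).map
        fun q => Tm.pre (some q.1) (Tm.par A (ecPre l1) q.2))))
    (bigEC (((l1.product l2).filter fun q => decide (q.1.1 = q.2.1 ∧ q.1.1 ∈ A)).map
      fun q => Tm.pre (some q.1.1) (Tm.par A q.1.2 q.2.2)))

/-- Basic process terms: built from `0` by prefixing, `∨`, `□` and `∥_A`. -/
inductive Basic : Tm Act → Prop where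
  | nil : Basic Tm.nil
  | pre (α : Option Act) {t : Tm Act} : Basic t → Basic (Tm.pre α t)
  | disj {t1 t2 : Tm Act} : Basic t1 → Basic t2 → Basic (Tm.disj t1 t2)
  | ec {t1 t2 : Tm Act} : Basic t1 → Basic t2 → Basic (Tm.ec t1 t2)
  | par (A : Set Act) {t1 t2 : Tm Act} :
      Basic t1 → Basic t2 → Basic (Tm.par A t1 t2)

/-- Derivability `⊢ t ≤ s` in the axiomatic system `AX_CLL`. -/
inductive Deriv : Tm Act → Tm Act → Prop where
  -- inference rules
  | refl (t : Tm Act) : Deriv t t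
  | trans {t u s : Tm Act} : Deriv t u → Deriv u s → Deriv t s
  | pre_mono (α : Option Act) {t s : Tm Act} :
      Deriv t s → Deriv (Tm.pre α t) (Tm.pre α s)
  | ec_mono {t1 s1 t2 s2 : Tm Act} :
      Deriv t1 s1 → Deriv t2 s2 → Deriv (Tm.ec t1 t2) (Tm.ec s1 s2)
  | conj_mono {t1 s1 t2 s2 : Tm Act} :
      Deriv t1 s1 → Deriv t2 s2 → Deriv (Tm.conj t1 t2) (Tm.conj s1 s2)
  | disj_mono {t1 s1 t2 s2 : Tm Act} :
      Deriv t1 s1 → Deriv t2 s2 → Deriv (Tm.disj t1 t2) (Tm.disj s1 s2)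
  | par_mono (A : Set Act) {t1 s1 t2 s2 : Tm Act} :
      Deriv t1 s1 → Deriv t2 s2 → Deriv (Tm.par A t1 t2) (Tm.par A s1 s2)
  -- EC1–EC5
  | ec_comm (x y : Tm Act) : Deriv (Tm.ec x y) (Tm.ec y x)
  | ec_assoc1 (x y z : Tm Act) : Deriv (Tm.ec (Tm.ec x y) z) (Tm.ec x (Tm.ec y z))
  | ec_assoc2 (x y z : Tm Act) : Deriv (Tm.ec x (Tm.ec y z)) (Tm.ec (Tm.ec x y) z)
  | ec_idem1 (x : Tm Act) : Deriv (Tm.ec x x) x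
  | ec_idem2 (x : Tm Act) : Deriv x (Tm.ec x x)
  | ec_nil1 (x : Tm Act) : Deriv (Tm.ec x Tm.nil) x
  | ec_nil2 (x : Tm Act) : Deriv x (Tm.ec x Tm.nil)
  | ec_bot1 (x : Tm Act) : Deriv (Tm.ec x Tm.bot) Tm.bot
  | ec_bot2 (x : Tm Act) : Deriv Tm.bot (Tm.ec x Tm.bot)
  -- DI1–DI5
  | di_comm (x y : Tm Act) : Deriv (Tm.disj x y) (Tm.disj y x)
  | di_assoc1 (x y z : Tm Act) :
      Deriv (Tm.disj x (Tm.disj y z)) (Tm.disj (Tm.disj x y) z)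
  | di_assoc2 (x y z : Tm Act) :
      Deriv (Tm.disj (Tm.disj x y) z) (Tm.disj x (Tm.disj y z))
  | di_idem1 (x : Tm Act) : Deriv (Tm.disj x x) x
  | di_idem2 (x : Tm Act) : Deriv x (Tm.disj x x)
  | di_bot1 (x : Tm Act) : Deriv (Tm.disj x Tm.bot) x
  | di_bot2 (x : Tm Act) : Deriv x (Tm.disj x Tm.bot)
  | di_le (x y : Tm Act) : Deriv x (Tm.disj x y)
  -- CO1–CO4
  | co_comm (x y : Tm Act) : Deriv (Tm.conj x y) (Tm.conj y x)
  | co_assoc1 (x y z : Tm Act) :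
      Deriv (Tm.conj (Tm.conj x y) z) (Tm.conj x (Tm.conj y z))
  | co_assoc2 (x y z : Tm Act) :
      Deriv (Tm.conj x (Tm.conj y z)) (Tm.conj (Tm.conj x y) z)
  | co_idem1 (x : Tm Act) : Deriv (Tm.conj x x) x
  | co_idem2 (x : Tm Act) : Deriv x (Tm.conj x x)
  | co_bot1 (x : Tm Act) : Deriv (Tm.conj x Tm.bot) Tm.bot
  | co_bot2 (x : Tm Act) : Deriv Tm.bot (Tm.conj x Tm.bot)
  -- DS1–DS4
  | ds1 (x y z : Tm Act) :
      Deriv (Tm.ec x (Tm.disj y z)) (Tm.disj (Tm.ec x y) (Tm.ec x z))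
  | ds2 (x y z : Tm Act) :
      Deriv (Tm.conj x (Tm.disj y z)) (Tm.disj (Tm.conj x y) (Tm.conj x z))
  | ds3 (A : Set Act) (x y z : Tm Act) :
      Deriv (Tm.par A x (Tm.disj y z)) (Tm.disj (Tm.par A x y) (Tm.par A x z))
  | ds4 (a : Act) {x y : Tm Act} : Basic x → Basic y →
      Deriv (Tm.pre (some a) (Tm.disj x y))
            (Tm.ec (Tm.pre (some a) x) (Tm.pre (some a) y))
  -- PR1, PR2
  | pr1a (a : Act) : Deriv (Tm.pre (some a) Tm.bot) Tm.bot
  | pr1b (a : Act) : Deriv Tm.bot (Tm.pre (some a) Tm.bot)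
  | pr2a (x : Tm Act) : Deriv (Tm.pre none x) x
  | pr2b (x : Tm Act) : Deriv x (Tm.pre none x)
  -- PA1, PA2
  | pa_comm (A : Set Act) (x y : Tm Act) : Deriv (Tm.par A x y) (Tm.par A y x)
  | pa_bot1 (A : Set Act) (x : Tm Act) : Deriv (Tm.par A x Tm.bot) Tm.bot
  | pa_bot2 (A : Set Act) (x : Tm Act) : Deriv Tm.bot (Tm.par A x Tm.bot)
  -- ECC1–ECC3
  | ecc1a (l1 l2 : List (Act × Tm Act)) :
      ({a | a ∈ l1.map Prod.fst} : Set Act) ≠ {a | a ∈ l2.map Prod.fst} →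
      Deriv (Tm.conj (ecPre l1) (ecPre l2)) Tm.bot
  | ecc1b (l1 l2 : List (Act × Tm Act)) :
      ({a | a ∈ l1.map Prod.fst} : Set Act) ≠ {a | a ∈ l2.map Prod.fst} →
      Deriv Tm.bot (Tm.conj (ecPre l1) (ecPre l2))
  | ecc2 (l : List (Act × Tm Act × Tm Act)) :
      Deriv (ecPre (l.map fun p => (p.1, Tm.conj p.2.1 p.2.2)))
            (Tm.conj (ecPre (l.map fun p => (p.1, p.2.1)))
                     (ecPre (l.map fun p => (p.1, p.2.2))))
  | ecc3 (l : List (Act × Tm Act × Tm Act)) :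
      (l.map Prod.fst).Nodup →
      Deriv (Tm.conj (ecPre (l.map fun p => (p.1, p.2.1)))
                     (ecPre (l.map fun p => (p.1, p.2.2))))
            (ecPre (l.map fun p => (p.1, Tm.conj p.2.1 p.2.2)))
  -- EXP1, EXP2
  | exp1 (A : Set Act) (l1 l2 : List (Act × Tm Act)) :
      (∀ p ∈ l1, Basic p.2) → (∀ q ∈ l2, Basic q.2) →
      Deriv (Tm.par A (ecPre l1) (ecPre l2)) (expRHS A l1 l2)
  | exp2 (A : Set Act) (l1 l2 : List (Act × Tm Act)) :
      (∀ p ∈ l1, Basic p.2) → (∀ q ∈ l2, Basic q.2) →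
      Deriv (expRHS A l1 l2) (Tm.par A (ecPre l1) (ecPre l2))

/-- The set `NF_B` of normal forms different from `⊥`. -/
inductive NFB : Tm Act → Prop where
  | mk (ls : List (List (Act × Tm Act))) :
      ls ≠ [] →
      (∀ l ∈ ls, (l.map Prod.fst).Nodup) →
      (∀ l ∈ ls, ∀ p ∈ l, NFB p.2) →
      NFB (bigDisj (ls.map ecPre))

/-- Normal forms. -/
def NF (t : Tm Act) : Prop := t = Tm.bot ∨ NFB t

end CLL

section Stmt16Aux

open CLL

attribute [local instance] Classical.propDecidable

variable {Act : Type} {M : CLL.Model Act}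

/-! ### Characterization of transitions in a stable model -/

lemma tr_pre (hM : IsStable M) {α β : Option Act} {t u : Tm Act} :
    M.Tr (Tm.pre α t) β u ↔ β = α ∧ u = t := by
  rw [hM.1]
  constructor
  · intro h; cases h; exact ⟨rfl, rfl⟩
  · rintro ⟨rfl, rfl⟩; exact STr.pre _ _

lemma stable_pre (hM : IsStable M) (a : Act) (t : Tm Act) :
    Stable M (Tm.pre (some a) t) := fun u h => by
  rcases (tr_pre hM).1 h with ⟨h', -⟩; cases h'

lemma tr_nil (hM : IsStable M) {α : Option Act} {u : Tm Act} :
    ¬ M.Tr Tm.nil α u := fun h => by rw [hM.1] at h; cases h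

lemma stable_nil (hM : IsStable M) : Stable M (Tm.nil : Tm Act) :=
  fun _ h => tr_nil hM h

lemma stable_ec (hM : IsStable M) {t1 t2 : Tm Act}
    (h1 : Stable M t1) (h2 : Stable M t2) : Stable M (Tm.ec t1 t2) := by
  intro u h; rw [hM.1] at h
  cases h with
  | ecTauL h => exact h1 _ ((hM.1 _ _ _).2 h)
  | ecTauR h => exact h2 _ ((hM.1 _ _ _).2 h)

lemma tr_ec (hM : IsStable M) {t1 t2 : Tm Act}
    (h1 : Stable M t1) (h2 : Stable M t2) {α : Option Act} {u : Tm Act} :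
    M.Tr (Tm.ec t1 t2) α u ↔ M.Tr t1 α u ∨ M.Tr t2 α u := by
  constructor
  · intro h; rw [hM.1] at h
    cases h with
    | ecL h _ => exact Or.inl ((hM.1 _ _ _).2 h)
    | ecR _ h => exact Or.inr ((hM.1 _ _ _).2 h)
    | ecTauL h => exact absurd ((hM.1 _ _ _).2 h) (h1 _)
    | ecTauR h => exact absurd ((hM.1 _ _ _).2 h) (h2 _)
  · intro h
    cases α with
    | none =>
      rcases h with h | h
      · exact absurd h (h1 _)
      · exact absurd h (h2 _)
    | some a =>
      rcases h with h | h
      · exact (hM.1 _ _ _).2 (STr.ecL ((hM.1 _ _ _).1 h) h2)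
      · exact (hM.1 _ _ _).2 (STr.ecR h1 ((hM.1 _ _ _).1 h))

lemma foldl_ec_spec (hM : IsStable M) :
    ∀ (ts : List (Tm Act)) (t : Tm Act), Stable M t → (∀ s ∈ ts, Stable M s) →
      Stable M (ts.foldl Tm.ec t) ∧
      ∀ α u, M.Tr (ts.foldl Tm.ec t) α u ↔ M.Tr t α u ∨ ∃ s ∈ ts, M.Tr s α u
  | [], t, ht, _ => ⟨ht, by simp⟩
  | s :: ts, t, ht, hts => by
    have hs : Stable M s := hts s List.mem_cons_self
    have hec := stable_ec hM ht hs
    obtain ⟨hst, hiff⟩ := foldl_ec_spec hM ts (Tm.ec t s) hec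
      (fun x hx => hts x (List.mem_cons_of_mem _ hx))
    refine ⟨hst, fun α u => ?_⟩
    show M.Tr (ts.foldl Tm.ec (Tm.ec t s)) α u ↔ _
    rw [hiff, tr_ec hM ht hs, List.exists_mem_cons_iff]
    tauto

lemma bigEC_spec (hM : IsStable M) (ts : List (Tm Act)) (h : ∀ s ∈ ts, Stable M s) :
    Stable M (bigEC ts) ∧ ∀ α u, M.Tr (bigEC ts) α u ↔ ∃ s ∈ ts, M.Tr s α u := by
  cases ts with
  | nil =>
    refine ⟨stable_nil hM, fun α u => ?_⟩
    simp only [bigEC, List.not_mem_nil, false_and, exists_false, iff_false]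
    exact tr_nil hM
  | cons t ts =>
    obtain ⟨h1, h2⟩ := foldl_ec_spec hM ts t (h t List.mem_cons_self)
      (fun s hs => h s (List.mem_cons_of_mem _ hs))
    refine ⟨h1, fun α u => ?_⟩
    rw [show bigEC (t :: ts) = ts.foldl Tm.ec t from rfl, h2, List.exists_mem_cons_iff]

lemma stable_mem_map_pre (hM : IsStable M) {β : Type} (l : List β)
    (f : β → Act) (g : β → Tm Act) :
    ∀ s ∈ l.map (fun x => Tm.pre (some (f x)) (g x)), Stable M s := by
  intro s hs
  obtain ⟨x, -, rfl⟩ := List.mem_map.1 hs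
  exact stable_pre hM _ _

lemma bigEC_pre_spec (hM : IsStable M) {β : Type} (l : List β)
    (f : β → Act) (g : β → Tm Act) :
    Stable M (bigEC (l.map fun x => Tm.pre (some (f x)) (g x))) ∧
    ∀ α u, M.Tr (bigEC (l.map fun x => Tm.pre (some (f x)) (g x))) α u ↔
      ∃ x ∈ l, α = some (f x) ∧ u = g x := by
  obtain ⟨h1, h2⟩ := bigEC_spec hM _ (stable_mem_map_pre hM l f g)
  refine ⟨h1, fun α u => ?_⟩
  rw [h2]
  simp only [List.mem_map]
  constructor
  · rintro ⟨s, ⟨x, hx, rfl⟩, h⟩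
    obtain ⟨rfl, rfl⟩ := (tr_pre hM).1 h
    exact ⟨x, hx, rfl, rfl⟩
  · rintro ⟨x, hx, rfl, rfl⟩
    exact ⟨_, ⟨x, hx, rfl⟩, (tr_pre hM).2 ⟨rfl, rfl⟩⟩

lemma ecPre_spec (hM : IsStable M) (l : List (Act × Tm Act)) :
    Stable M (ecPre l) ∧
    ∀ α u, M.Tr (ecPre l) α u ↔ ∃ p ∈ l, α = some p.1 ∧ u = p.2 :=
  bigEC_pre_spec hM l Prod.fst Prod.snd

lemma stable_par (hM : IsStable M) {A : Set Act} {t1 t2 : Tm Act}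
    (h1 : Stable M t1) (h2 : Stable M t2) : Stable M (Tm.par A t1 t2) := by
  intro u h; rw [hM.1] at h
  cases h with
  | parTauL h => exact h1 _ ((hM.1 _ _ _).2 h)
  | parTauR h => exact h2 _ ((hM.1 _ _ _).2 h)

lemma tr_par (hM : IsStable M) {A : Set Act} {t1 t2 : Tm Act}
    (h1 : Stable M t1) (h2 : Stable M t2) (α : Option Act) (u : Tm Act) :
    M.Tr (Tm.par A t1 t2) α u ↔
      ∃ a, α = some a ∧
        ((a ∉ A ∧ ∃ y, M.Tr t1 (some a) y ∧ u = Tm.par A y t2) ∨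
         (a ∉ A ∧ ∃ y, M.Tr t2 (some a) y ∧ u = Tm.par A t1 y) ∨
         (a ∈ A ∧ ∃ y1 y2, M.Tr t1 (some a) y1 ∧ M.Tr t2 (some a) y2 ∧
            u = Tm.par A y1 y2)) := by
  constructor
  · intro h; rw [hM.1] at h
    cases h with
    | parTauL h => exact absurd ((hM.1 _ _ _).2 h) (h1 _)
    | parTauR h => exact absurd ((hM.1 _ _ _).2 h) (h2 _)
    | parL h _ ha => exact ⟨_, rfl, Or.inl ⟨ha, _, (hM.1 _ _ _).2 h, rfl⟩⟩
    | parR _ h ha => exact ⟨_, rfl, Or.inr (Or.inl ⟨ha, _, (hM.1 _ _ _).2 h, rfl⟩)⟩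
    | parSync hl hr ha =>
        exact ⟨_, rfl, Or.inr (Or.inr ⟨ha, _, _, (hM.1 _ _ _).2 hl,
          (hM.1 _ _ _).2 hr, rfl⟩)⟩
  · rintro ⟨a, rfl, ⟨ha, y, hy, rfl⟩ | ⟨ha, y, hy, rfl⟩ | ⟨ha, y1, y2, hy1, hy2, rfl⟩⟩
    · exact (hM.1 _ _ _).2 (STr.parL ((hM.1 _ _ _).1 hy) h2 ha)
    · exact (hM.1 _ _ _).2 (STr.parR h1 ((hM.1 _ _ _).1 hy) ha)
    · exact (hM.1 _ _ _).2
        (STr.parSync ((hM.1 _ _ _).1 hy1) ((hM.1 _ _ _).1 hy2) ha)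

/-! ### Characterization of the inconsistency predicate -/

lemma f_nil (hM : IsStable M) : ¬ M.F (Tm.nil : Tm Act) := by
  rw [hM.2.1]; intro h; cases h

lemma f_pre (hM : IsStable M) {α : Option Act} {t : Tm Act} :
    M.F (Tm.pre α t) ↔ M.F t := by
  rw [hM.2.1, hM.2.1]
  constructor
  · intro h; cases h with | pre _ h => exact h
  · exact fun h => SF.pre α h

lemma f_ec (hM : IsStable M) {t1 t2 : Tm Act} :
    M.F (Tm.ec t1 t2) ↔ M.F t1 ∨ M.F t2 := by
  rw [hM.2.1, hM.2.1, hM.2.1]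
  constructor
  · intro h
    cases h with
    | ecL h => exact Or.inl h
    | ecR h => exact Or.inr h
  · rintro (h | h)
    · exact SF.ecL h
    · exact SF.ecR h

lemma f_par (hM : IsStable M) {A : Set Act} {t1 t2 : Tm Act} :
    M.F (Tm.par A t1 t2) ↔ M.F t1 ∨ M.F t2 := by
  rw [hM.2.1, hM.2.1, hM.2.1]
  constructor
  · intro h
    cases h with
    | parL h => exact Or.inl h
    | parR h => exact Or.inr h
  · rintro (h | h)
    · exact SF.parL h
    · exact SF.parR h

lemma f_foldl_ec (hM : IsStable M) :
    ∀ (ts : List (Tm Act)) (t : Tm Act),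
      M.F (ts.foldl Tm.ec t) ↔ M.F t ∨ ∃ s ∈ ts, M.F s
  | [], t => by simp
  | s :: ts, t => by
    show M.F (ts.foldl Tm.ec (Tm.ec t s)) ↔ _
    rw [f_foldl_ec hM ts (Tm.ec t s), f_ec hM, List.exists_mem_cons_iff]
    tauto

lemma f_bigEC (hM : IsStable M) (ts : List (Tm Act)) :
    M.F (bigEC ts) ↔ ∃ t ∈ ts, M.F t := by
  cases ts with
  | nil => simp [bigEC, f_nil hM]
  | cons t ts =>
    rw [show bigEC (t :: ts) = ts.foldl Tm.ec t from rfl, f_foldl_ec hM,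
      List.exists_mem_cons_iff]

lemma f_bigEC_pre (hM : IsStable M) {β : Type} (l : List β)
    (f : β → Act) (g : β → Tm Act) :
    M.F (bigEC (l.map fun x => Tm.pre (some (f x)) (g x))) ↔
      ∃ x ∈ l, M.F (g x) := by
  rw [f_bigEC hM]
  simp only [List.mem_map]
  constructor
  · rintro ⟨s, ⟨x, hx, rfl⟩, h⟩
    exact ⟨x, hx, (f_pre hM).1 h⟩
  · rintro ⟨x, hx, h⟩
    exact ⟨_, ⟨x, hx, rfl⟩, (f_pre hM).2 h⟩

lemma f_ecPre (hM : IsStable M) (l : List (Act × Tm Act)) :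
    M.F (ecPre l) ↔ ∃ p ∈ l, M.F p.2 :=
  f_bigEC_pre hM l Prod.fst Prod.snd

/-! ### The key equality of behaviours -/

lemma stmt16_key (hM : IsStable M) (A : Set Act) (l1 l2 : List (Act × Tm Act)) :
    Stable M (Tm.par A (ecPre l1) (ecPre l2)) ∧ Stable M (expRHS A l1 l2) ∧
    (∀ α u, M.Tr (Tm.par A (ecPre l1) (ecPre l2)) α u ↔ M.Tr (expRHS A l1 l2) α u) ∧
    (M.F (expRHS A l1 l2) → M.F (Tm.par A (ecPre l1) (ecPre l2))) ∧
    ((∀ p ∈ l1, p.1 ∈ A → (∀ q ∈ l2, p.1 ≠ q.1) → ¬ M.F p.2) →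
     (∀ q ∈ l2, q.1 ∈ A → (∀ p ∈ l1, q.1 ≠ p.1) → ¬ M.F q.2) →
     M.F (Tm.par A (ecPre l1) (ecPre l2)) → M.F (expRHS A l1 l2)) := by
  obtain ⟨hs1, ht1⟩ := ecPre_spec hM l1
  obtain ⟨hs2, ht2⟩ := ecPre_spec hM l2
  -- the three summand lists of the right-hand side
  obtain ⟨hsB1, htB1⟩ := bigEC_pre_spec hM (l1.filter fun p => decide (p.1 ∉ A))
    Prod.fst (fun p => Tm.par A p.2 (ecPre l2))
  obtain ⟨hsB2, htB2⟩ := bigEC_pre_spec hM (l2.filter fun q => decide (q.1 ∉ A))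
    Prod.fst (fun q => Tm.par A (ecPre l1) q.2)
  obtain ⟨hsB3, htB3⟩ := bigEC_pre_spec hM
    ((l1.product l2).filter fun q : (Act × Tm Act) × Act × Tm Act =>
      decide (q.1.1 = q.2.1 ∧ q.1.1 ∈ A))
    (fun q => q.1.1) (fun q => Tm.par A q.1.2 q.2.2)
  have hsL : Stable M (Tm.par A (ecPre l1) (ecPre l2)) := stable_par hM hs1 hs2
  have hsR : Stable M (expRHS A l1 l2) :=
    stable_ec hM (stable_ec hM hsB1 hsB2) hsB3
  have htR : ∀ α u, M.Tr (expRHS A l1 l2) α u ↔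
      ((∃ p ∈ l1, p.1 ∉ A ∧ α = some p.1 ∧ u = Tm.par A p.2 (ecPre l2)) ∨
       (∃ q ∈ l2, q.1 ∉ A ∧ α = some q.1 ∧ u = Tm.par A (ecPre l1) q.2) ∨
       (∃ p ∈ l1, ∃ q ∈ l2, p.1 = q.1 ∧ p.1 ∈ A ∧ α = some p.1 ∧
          u = Tm.par A p.2 q.2)) := by
    intro α u
    rw [show expRHS A l1 l2 = Tm.ec (Tm.ec _ _) _ from rfl,
      tr_ec hM (stable_ec hM hsB1 hsB2) hsB3, tr_ec hM hsB1 hsB2,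
      htB1 α u, htB2 α u, htB3 α u]
    constructor
    · rintro ((⟨p, hp, rfl, rfl⟩ | ⟨q, hq, rfl, rfl⟩) | ⟨x, hx, rfl, rfl⟩)
      · rw [List.mem_filter] at hp
        exact Or.inl ⟨p, hp.1, by simpa using hp.2, rfl, rfl⟩
      · rw [List.mem_filter] at hq
        exact Or.inr (Or.inl ⟨q, hq.1, by simpa using hq.2, rfl, rfl⟩)
      · rw [List.mem_filter] at hx
        obtain ⟨hmem, hcond⟩ := hx
        obtain ⟨x1, x2⟩ := x
        rw [List.pair_mem_product] at hmem
        have hc : x1.1 = x2.1 ∧ x1.1 ∈ A := by simpa using hcond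
        exact Or.inr (Or.inr ⟨x1, hmem.1, x2, hmem.2, hc.1, hc.2, rfl, rfl⟩)
    · rintro (⟨p, hp, hpA, rfl, rfl⟩ | ⟨q, hq, hqA, rfl, rfl⟩ |
        ⟨p, hp, q, hq, heq, hA, rfl, rfl⟩)
      · exact Or.inl (Or.inl ⟨p, List.mem_filter.2 ⟨hp, by simpa using hpA⟩, rfl, rfl⟩)
      · exact Or.inl (Or.inr ⟨q, List.mem_filter.2 ⟨hq, by simpa using hqA⟩, rfl, rfl⟩)
      · exact Or.inr ⟨(p, q), List.mem_filter.2
          ⟨List.pair_mem_product.2 ⟨hp, hq⟩, by simpa using ⟨heq, hA⟩⟩, rfl, rfl⟩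
  have htLR : ∀ α u, M.Tr (Tm.par A (ecPre l1) (ecPre l2)) α u ↔
      M.Tr (expRHS A l1 l2) α u := by
    intro α u
    rw [tr_par hM hs1 hs2, htR]
    constructor
    · rintro ⟨a, rfl, ⟨ha, y, hy, rfl⟩ | ⟨ha, y, hy, rfl⟩ |
        ⟨ha, y1, y2, hy1, hy2, rfl⟩⟩
      · obtain ⟨p, hp, hpe, rfl⟩ := (ht1 _ _).1 hy
        obtain rfl : a = p.1 := by injection hpe
        exact Or.inl ⟨p, hp, ha, rfl, rfl⟩
      · obtain ⟨q, hq, hqe, rfl⟩ := (ht2 _ _).1 hy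
        obtain rfl : a = q.1 := by injection hqe
        exact Or.inr (Or.inl ⟨q, hq, ha, rfl, rfl⟩)
      · obtain ⟨p, hp, hpe, rfl⟩ := (ht1 _ _).1 hy1
        obtain ⟨q, hq, hqe, rfl⟩ := (ht2 _ _).1 hy2
        obtain rfl : a = p.1 := by injection hpe
        obtain heq : p.1 = q.1 := by injection hqe
        exact Or.inr (Or.inr ⟨p, hp, q, hq, heq, ha, rfl, rfl⟩)
    · rintro (⟨p, hp, hpA, rfl, rfl⟩ | ⟨q, hq, hqA, rfl, rfl⟩ |
        ⟨p, hp, q, hq, heq, hA, rfl, rfl⟩)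
      · exact ⟨p.1, rfl, Or.inl ⟨hpA, p.2, (ht1 _ _).2 ⟨p, hp, rfl, rfl⟩, rfl⟩⟩
      · exact ⟨q.1, rfl, Or.inr (Or.inl ⟨hqA, q.2, (ht2 _ _).2 ⟨q, hq, rfl, rfl⟩, rfl⟩)⟩
      · exact ⟨p.1, rfl, Or.inr (Or.inr ⟨hA, p.2, q.2,
          (ht1 _ _).2 ⟨p, hp, rfl, rfl⟩,
          (ht2 _ _).2 ⟨q, hq, by rw [heq], rfl⟩, rfl⟩)⟩
  -- the F-characterizations
  have hfL : M.F (Tm.par A (ecPre l1) (ecPre l2)) ↔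
      (∃ p ∈ l1, M.F p.2) ∨ (∃ q ∈ l2, M.F q.2) := by
    rw [f_par hM, f_ecPre hM, f_ecPre hM]
  have hfR : M.F (expRHS A l1 l2) ↔
      ((∃ p ∈ l1.filter fun p => decide (p.1 ∉ A), M.F (Tm.par A p.2 (ecPre l2))) ∨
       (∃ q ∈ l2.filter fun q => decide (q.1 ∉ A), M.F (Tm.par A (ecPre l1) q.2)) ∨
       (∃ x ∈ (l1.product l2).filter fun q => decide (q.1.1 = q.2.1 ∧ q.1.1 ∈ A),
          M.F (Tm.par A x.1.2 x.2.2))) := by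
    rw [show expRHS A l1 l2 = Tm.ec (Tm.ec _ _) _ from rfl, f_ec hM, f_ec hM,
      f_bigEC_pre hM, f_bigEC_pre hM, f_bigEC_pre hM, or_assoc]
  refine ⟨hsL, hsR, htLR, ?_, ?_⟩
  · -- F R → F L
    intro h
    rw [hfR] at h
    rw [hfL]
    rcases h with ⟨p, hp, h⟩ | ⟨q, hq, h⟩ | ⟨x, hx, h⟩
    · rw [List.mem_filter] at hp
      rcases (f_par hM).1 h with h | h
      · exact Or.inl ⟨p, hp.1, h⟩
      · exact Or.inr ((f_ecPre hM l2).1 h)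
    · rw [List.mem_filter] at hq
      rcases (f_par hM).1 h with h | h
      · exact Or.inl ((f_ecPre hM l1).1 h)
      · exact Or.inr ⟨q, hq.1, h⟩
    · rw [List.mem_filter] at hx
      obtain ⟨x1, x2⟩ := x
      rw [List.pair_mem_product] at hx
      rcases (f_par hM).1 h with h | h
      · exact Or.inl ⟨x1, hx.1.1, h⟩
      · exact Or.inr ⟨x2, hx.1.2, h⟩
  · -- F L → F R under the side conditions
    intro hc1 hc2 h
    rw [hfL] at h
    rw [hfR]
    rcases h with ⟨p, hp, h⟩ | ⟨q, hq, h⟩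
    · by_cases hpA : p.1 ∈ A
      · by_cases hmatch : ∃ q ∈ l2, p.1 = q.1
        · obtain ⟨q, hq, heq⟩ := hmatch
          refine Or.inr (Or.inr ⟨(p, q), List.mem_filter.2
            ⟨List.pair_mem_product.2 ⟨hp, hq⟩, by simpa using ⟨heq, hpA⟩⟩,
            (f_par hM).2 (Or.inl h)⟩)
        · exact absurd h (hc1 p hp hpA (fun q hq => by
            intro heq; exact hmatch ⟨q, hq, heq⟩))
      · exact Or.inl ⟨p, List.mem_filter.2 ⟨hp, by simpa using hpA⟩,
          (f_par hM).2 (Or.inl h)⟩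
    · by_cases hqA : q.1 ∈ A
      · by_cases hmatch : ∃ p ∈ l1, p.1 = q.1
        · obtain ⟨p, hp, heq⟩ := hmatch
          refine Or.inr (Or.inr ⟨(p, q), List.mem_filter.2
            ⟨List.pair_mem_product.2 ⟨hp, hq⟩, by simpa using ⟨heq, heq ▸ hqA⟩⟩,
            (f_par hM).2 (Or.inr h)⟩)
        · exact absurd h (hc2 q hq hqA (fun p hp => by
            intro heq; exact hmatch ⟨p, hp, heq.symm⟩))
      · exact Or.inr (Or.inl ⟨q, List.mem_filter.2 ⟨hq, by simpa using hqA⟩,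
          (f_par hM).2 (Or.inr h)⟩)

/-! ### From identical behaviour to `⊑_RS` -/

lemma eps_of_stable (hM : IsStable M) {t t' : Tm Act} (ht : Stable M t)
    (h : Relation.ReflTransGen (TauF M) t t') : t' = t := by
  rcases Relation.ReflTransGen.cases_head h with h' | ⟨c, hc, -⟩
  · exact h'.symm
  · exact absurd hc.1 (ht c)

lemma RSle_of_same (hM : IsStable M) {t s : Tm Act}
    (hst : Stable M t) (hss : Stable M s)
    (htr : ∀ α u, M.Tr t α u ↔ M.Tr s α u)
    (hf : ¬ M.F t → ¬ M.F s) : RSle M t s := by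
  rintro t' ⟨⟨hnF, hrt⟩, hstab⟩
  have heq := eps_of_stable hM hst hrt
  rw [heq] at hstab ⊢
  refine ⟨s, ⟨⟨hf hnF, Relation.ReflTransGen.refl⟩, hss⟩, ?_⟩
  refine ⟨fun u v => (Stable M u ∧ u = v) ∨ (u = t ∧ v = s), ?_, Or.inr ⟨rfl, rfl⟩⟩
  rintro u v (⟨hu, rfl⟩ | ⟨rfl, rfl⟩)
  · exact ⟨⟨hu, hu⟩, id, fun a w hw => ⟨w, hw, Or.inl ⟨hw.2, rfl⟩⟩, fun _ => rfl⟩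
  · refine ⟨⟨hst, hss⟩, hf, ?_, ?_⟩
    · rintro a w ⟨⟨r, p, ⟨hnFt, hrr⟩, hTr, hEps⟩, hwst⟩
      have hreq := eps_of_stable hM hst hrr
      rw [hreq] at hTr
      exact ⟨w, ⟨⟨v, p, ⟨hf hnFt, Relation.ReflTransGen.refl⟩, (htr _ _).1 hTr, hEps⟩,
        hwst⟩, Or.inl ⟨hwst, rfl⟩⟩
    · intro _
      exact Set.ext fun α => exists_congr fun u' => htr α u'

end Stmt16Aux

/-- expansion law for the parallel composition of general
external choices of prefixed terms. -/
theorem stmt16 (Act : Type) (M : CLL.Model Act) (hM : CLL.IsStable M)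
    (A : Set Act) (l1 l2 : List (Act × CLL.Tm Act)) :
    CLL.RSle M (CLL.Tm.par A (CLL.ecPre l1) (CLL.ecPre l2))
      (CLL.expRHS A l1 l2) ∧
    ((∀ p ∈ l1, p.1 ∈ A → (∀ q ∈ l2, p.1 ≠ q.1) → ¬ M.F p.2) →
     (∀ q ∈ l2, q.1 ∈ A → (∀ p ∈ l1, q.1 ≠ p.1) → ¬ M.F q.2) →
     CLL.RSle M (CLL.expRHS A l1 l2)
       (CLL.Tm.par A (CLL.ecPre l1) (CLL.ecPre l2))) := by
  obtain ⟨hsL, hsR, htr, hFRL, hFLR⟩ := stmt16_key hM A l1 l2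
  constructor
  · exact RSle_of_same hM hsL hsR htr (fun h hR => h (hFRL hR))
  · intro h1 h2
    exact RSle_of_same hM hsR hsL (fun α u => (htr α u).symm)
      (fun h hL => h (hFLR h1 h2 hL))
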